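/- Let P be a scale group acting on T_{q+1}, let v be a vertex, and let V = Stab_P(v). Then there exists x ∈ P such that xVx⁻¹ is a proper subgroup of V with index [V : xVx⁻¹] = q; and for every x ∈ P with xVx⁻¹ a proper subgroup of V of index q, the union ⋃_{n∈ℤ} xⁿVx⁻ⁿ equals P^(e), the set of elliptic elements of P. -/

import Mathlib

namespace Scale

/-- A vertex of the `(q+1)`-regular tree `T_{q+1}`: a level `n ∈ ℤ` together with a
labelling `ℤ → Fin q` which vanishes above the level and for all sufficiently small indices. -/
@[ext] structure Vertex (q : ℕ) where
  level : ℤ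
  lab : ℤ → Fin q
  zero_gt : ∀ i : ℤ, level < i → (lab i : ℕ) = 0
  bdd : ∃ N : ℤ, ∀ i : ℤ, i < N → (lab i : ℕ) = 0

namespace Vertex

variable {q : ℕ} [NeZero q]

/-- The parent `v⁺` of a vertex. -/
def parent (v : Vertex q) : Vertex q where
  level := v.level - 1
  lab := fun i => if v.level - 1 < i then 0 else v.lab i
  zero_gt := by intro i hi; simp [hi]
  bdd := by
    obtain ⟨N, hN⟩ := v.bdd
    refine ⟨N, fun i hi => ?_⟩
    by_cases h : v.level - 1 < i
    · simp [h]
    · simp [h, hN i hi]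

/-- The child `vj` of a vertex `v`. -/
def child (v : Vertex q) (j : Fin q) : Vertex q where
  level := v.level + 1
  lab := fun i => if i = v.level + 1 then j else v.lab i
  zero_gt := by
    intro i hi
    have h1 : i ≠ v.level + 1 := by omega
    simp [h1, v.zero_gt i (by omega)]
  bdd := by
    obtain ⟨N, hN⟩ := v.bdd
    refine ⟨min N (v.level + 1), fun i hi => ?_⟩
    have h1 : i < N := lt_of_lt_of_le hi (min_le_left _ _)
    have h2 : i < v.level + 1 := lt_of_lt_of_le hi (min_le_right _ _)
    have h3 : i ≠ v.level + 1 := by omega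
    simp [h3, hN i h1]

/-- The restriction `w|_m` of a vertex to level `m`. -/
def trunc (v : Vertex q) (m : ℤ) : Vertex q where
  level := m
  lab := fun i => if m < i then 0 else v.lab i
  zero_gt := by intro i hi; simp [hi]
  bdd := by
    obtain ⟨N, hN⟩ := v.bdd
    refine ⟨N, fun i hi => ?_⟩
    by_cases h : m < i
    · simp [h]
    · simp [h, hN i hi]

/-- `w` is a descendant of `u` (in the rooted subtree `T_u`). -/
def Descendant (u w : Vertex q) : Prop := u.level ≤ w.level ∧ trunc w u.level = u

end Vertex

/-- The all-zero vertex `ṽ_n` at level `n`. -/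
def zeroVtx (q : ℕ) [NeZero q] (n : ℤ) : Vertex q where
  level := n
  lab := fun _ => 0
  zero_gt := by intro i _; simp
  bdd := ⟨0, by intro i _; simp⟩

/-- The map shifting all labels by `k` (a translation towards the end `ω` when `k > 0`). -/
def shiftMap {q : ℕ} (k : ℤ) (v : Vertex q) : Vertex q where
  level := v.level + k
  lab := fun i => v.lab (i - k)
  zero_gt := fun i hi => v.zero_gt (i - k) (by omega)
  bdd := by
    obtain ⟨N, hN⟩ := v.bdd
    exact ⟨N + k, fun i hi => hN (i - k) (by omega)⟩

/-- The translation `x̃₀ᵏ` of `T_{q+1}` as a permutation of the vertices. -/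
def shiftPerm (q : ℕ) (k : ℤ) : Equiv.Perm (Vertex q) where
  toFun := shiftMap k
  invFun := shiftMap (-k)
  left_inv := by
    intro v
    refine Vertex.ext ?_ ?_
    · show v.level + k + -k = v.level
      omega
    · funext i
      show v.lab (i - -k - k) = v.lab i
      congr 1
      omega
  right_inv := by
    intro v
    refine Vertex.ext ?_ ?_
    · show v.level + -k + k = v.level
      omega
    · funext i
      show v.lab (i - k - -k) = v.lab i
      congr 1
      omega

/-- The group `Isom(T_{q+1})_ω` of tree automorphisms fixing the distinguished end `ω`,
realised as the subgroup of permutations of the vertex set commuting with `parent`. -/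
def IsomOmega (q : ℕ) [NeZero q] : Subgroup (Equiv.Perm (Vertex q)) where
  carrier := {x | ∀ v : Vertex q, x (Vertex.parent v) = Vertex.parent (x v)}
  one_mem' := fun _ => rfl
  mul_mem' := by
    intro a b ha hb v
    show (a * b) (Vertex.parent v) = Vertex.parent ((a * b) v)
    rw [Equiv.Perm.mul_apply, Equiv.Perm.mul_apply, hb, ha]
  inv_mem' := by
    intro a ha v
    show a⁻¹ (Vertex.parent v) = Vertex.parent (a⁻¹ v)
    have h := ha (a⁻¹ v)
    rw [(show ∀ x, a (a⁻¹ x) = x from fun x => Equiv.apply_symm_apply a x)] at h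
    rw [← h, (show ∀ x, a⁻¹ (a x) = x from fun x => Equiv.symm_apply_apply a x)]

/-- The level shift `n(x)` of an automorphism (evaluated at the zero vertex; for members
of `IsomOmega q` the shift is the same at every vertex). -/
def lshift {q : ℕ} [NeZero q] (x : Equiv.Perm (Vertex q)) : ℤ := (x (zeroVtx q 0)).level

/-- An automorphism is elliptic if it fixes a vertex. -/
def Elliptic {q : ℕ} (x : Equiv.Perm (Vertex q)) : Prop := ∃ v : Vertex q, x v = v

/-- Topology of pointwise convergence on `X → X` for `X` discrete. -/
def funTop (X : Type*) : TopologicalSpace (X → X) :=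
  @Pi.topologicalSpace X (fun _ => X) (fun _ => ⊥)

/-- The permutation topology on `Equiv.Perm X`: pointwise stabilisers of finite sets of
points form a neighbourhood basis of the identity. -/
def permTop (X : Type*) : TopologicalSpace (Equiv.Perm X) :=
  @TopologicalSpace.induced (Equiv.Perm X) ((X → X) × (X → X))
    (fun g => ((g : X → X), ((g⁻¹ : Equiv.Perm X) : X → X)))
    (@instTopologicalSpaceProd _ _ (funTop X) (funTop X))

instance (q : ℕ) : TopologicalSpace (Equiv.Perm (Vertex q)) := permTop _

instance (q : ℕ) : TopologicalSpace (Equiv.Perm (List (Fin q))) := permTop _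

/-- A scale group: a closed subgroup of `Isom(T_{q+1})_ω` acting transitively on vertices. -/
def IsScaleGroup {q : ℕ} [NeZero q] (P : Subgroup (Equiv.Perm (Vertex q))) : Prop :=
  P ≤ IsomOmega q ∧ IsClosed (P : Set (Equiv.Perm (Vertex q))) ∧
    ∀ v w : Vertex q, ∃ x ∈ P, x v = w

/-- The stabiliser of the vertex `v` in `P`, as a subgroup of the ambient permutation group. -/
def stabIn {q : ℕ} (P : Subgroup (Equiv.Perm (Vertex q))) (v : Vertex q) :
    Subgroup (Equiv.Perm (Vertex q)) where
  carrier := {g | g ∈ P ∧ g v = v}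
  one_mem' := ⟨P.one_mem, rfl⟩
  mul_mem' := by
    intro a b ha hb
    exact ⟨P.mul_mem ha.1 hb.1, by rw [Equiv.Perm.mul_apply, hb.2, ha.2]⟩
  inv_mem' := by
    intro a ha
    refine ⟨P.inv_mem ha.1, ?_⟩
    rw [Equiv.Perm.inv_eq_iff_eq]
    exact ha.2.symm

/-- The conjugate subgroup `xVx⁻¹`. -/
def conjSub {G : Type*} [Group G] (x : G) (V : Subgroup G) : Subgroup G :=
  V.map (MulAut.conj x).toMonoidHom

/-- The vertex `ξ|_m` on the ray towards the end represented by `ξ`. -/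
def ray (q : ℕ) [NeZero q] (ξ : ℤ → Fin q) (N : ℤ) (hξ : ∀ i : ℤ, i < N → (ξ i : ℕ) = 0)
    (m : ℤ) : Vertex q where
  level := m
  lab := fun i => if m < i then 0 else ξ i
  zero_gt := by intro i hi; simp [hi]
  bdd := by
    refine ⟨N, fun i hi => ?_⟩
    by_cases h : m < i
    · simp [h]
    · simp [h, hξ i hi]

/-- The contraction group of `x` in `P`. -/
def conSet {q : ℕ} (P : Subgroup (Equiv.Perm (Vertex q))) (x : Equiv.Perm (Vertex q)) :
    Set (Equiv.Perm (Vertex q)) :=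
  {g | g ∈ P ∧ ∀ v : Vertex q, ∃ N : ℕ, ∀ n : ℕ, N ≤ n → (x ^ n * g * (x ^ n)⁻¹) v = v}


/-- `c` is a `P`-labelling of `T_{q+1}` with distinguished bi-infinite path `vp`:
each `c v` is a bijection from the directed edges out of `v` (encoded as the
neighbours of `v`) to `{0, …, q}`; the edge towards the parent is labelled `q`;
along the path `vp` the downward edges are labelled `0`; and `P` contains, for
all `u₁, u₂`, an element carrying `u₁` to `u₂` and preserving the labels on the
rooted subtree of descendants of `u₁`. -/
def IsPLabelling {q : ℕ} [NeZero q] (P : Subgroup (Equiv.Perm (Vertex q)))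
    (c : Vertex q → Vertex q → Fin (q + 1)) (vp : ℤ → Vertex q) : Prop :=
  (∀ v : Vertex q, ∀ j : Fin (q + 1),
      ∃! w : Vertex q, (Vertex.parent w = v ∨ w = Vertex.parent v) ∧ c v w = j) ∧
  (∀ v : Vertex q, (c v (Vertex.parent v) : ℕ) = q) ∧
  (∀ n : ℤ, Vertex.parent (vp (n + 1)) = vp n) ∧
  (∀ n : ℤ, (c (vp n) (vp (n + 1)) : ℕ) = 0) ∧
  (∀ u₁ u₂ : Vertex q, ∃ x, x ∈ P ∧ x u₁ = u₂ ∧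
    ∀ w w' : Vertex q, Vertex.Descendant u₁ w → Vertex.Descendant u₁ w' →
      (Vertex.parent w = w' ∨ Vertex.parent w' = w) → c (x w) (x w') = c w w')

open Classical in
/-- The standard labelling of `T_{q+1}`: the edge from `v` to its child `vj` is
labelled `j` and the edge towards the parent is labelled `q`. -/
noncomputable def stdLabel (q : ℕ) [NeZero q] : Vertex q → Vertex q → Fin (q + 1) :=
  fun v w =>
    if Vertex.parent w = v then Fin.castLE (Nat.le_succ q) (w.lab (v.level + 1))
    else Fin.last q

/-- Convert an edge label in `{0,…,q}` known to be `< q` into a letter in `{0,…,q-1}`. -/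
def toFinQ {q : ℕ} [NeZero q] (j : Fin (q + 1)) : Fin q :=
  if h : (j : ℕ) < q then ⟨j, h⟩ else ⟨0, Nat.pos_of_ne_zero (NeZero.ne q)⟩

/-- The string of labels read along the downward path of length `d` ending at `w`. -/
def labelString {q : ℕ} [NeZero q] (c : Vertex q → Vertex q → Fin (q + 1)) :
    Vertex q → ℕ → List (Fin q)
  | _, 0 => []
  | w, (d + 1) => labelString c (Vertex.parent w) d ++ [toFinQ (c (Vertex.parent w) w)]

/-- The isomorphism `φ^c_v : T_v → T_{q,q}` given by a labelling `c`: a descendant `w`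
of `v` is sent to the string of labels along the path from `v` down to `w`. -/
def phiStr {q : ℕ} [NeZero q] (c : Vertex q → Vertex q → Fin (q + 1)) (v w : Vertex q) :
    List (Fin q) :=
  labelString c w ((w.level - v.level).toNat)

/-- The set `P|_v = {φ^c_{x(v)} ∘ x ∘ (φ^c_v)⁻¹ : x ∈ P}` of sections of elements of `P`
at the vertex `v`, with respect to the labelling `c`. -/
def sectSet {q : ℕ} [NeZero q] (P : Subgroup (Equiv.Perm (Vertex q)))
    (c : Vertex q → Vertex q → Fin (q + 1)) (v : Vertex q) :
    Set (Equiv.Perm (List (Fin q))) :=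
  {g | ∃ x, x ∈ P ∧ ∀ w : Vertex q, Vertex.Descendant v w →
        g (phiStr c v w) = phiStr c (x v) (x w)}

/-- The standard isomorphism `φ_v : T_v → T_{q,q}`: a descendant `w` of `v` of level `m`
is sent to the string `(w_{n+1}, …, w_m)` where `n` is the level of `v`. -/
def stdStr {q : ℕ} (v w : Vertex q) : List (Fin q) :=
  (List.range (w.level - v.level).toNat).map fun k => w.lab (v.level + 1 + k)

/-- The set `{φ_{x(v)} ∘ x ∘ φ_v⁻¹ : x ∈ P}` with respect to the standard isomorphisms. -/
def stdSect {q : ℕ} [NeZero q] (P : Subgroup (Equiv.Perm (Vertex q))) (v : Vertex q) :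
    Set (Equiv.Perm (List (Fin q))) :=
  {g | ∃ x, x ∈ P ∧ ∀ w : Vertex q, Vertex.Descendant v w →
        g (stdStr v w) = stdStr (x v) (x w)}

/-- `Isom(T_{q,q})`: the group of permutations of the set of finite strings over
`{0,…,q-1}` preserving length and the prefix relation. -/
def RIsom (q : ℕ) : Subgroup (Equiv.Perm (List (Fin q))) where
  carrier := {g | (∀ l : List (Fin q), (g l).length = l.length) ∧
    ∀ l₁ l₂ : List (Fin q), l₁ <+: l₂ → g l₁ <+: g l₂}
  one_mem' := ⟨fun _ => rfl, fun _ _ h => h⟩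
  mul_mem' := by
    intro a b ha hb
    constructor
    · intro l
      rw [Equiv.Perm.mul_apply, ha.1, hb.1]
    · intro l₁ l₂ h
      rw [Equiv.Perm.mul_apply, Equiv.Perm.mul_apply]
      exact ha.2 _ _ (hb.2 _ _ h)
  inv_mem' := by
    intro a ha
    have hlen : ∀ l : List (Fin q), (a⁻¹ l).length = l.length := by
      intro l
      have h := ha.1 (a⁻¹ l)
      rw [(show ∀ x, a (a⁻¹ x) = x from fun x => Equiv.apply_symm_apply a x)] at h
      exact h.symm
    refine ⟨hlen, ?_⟩
    intro l₁ l₂ h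
    have htake : List.take (a⁻¹ l₁).length (a⁻¹ l₂) <+: a⁻¹ l₂ := List.take_prefix _ _
    have h2 : a (List.take (a⁻¹ l₁).length (a⁻¹ l₂)) <+: a (a⁻¹ l₂) := ha.2 _ _ htake
    rw [(show ∀ x, a (a⁻¹ x) = x from fun x => Equiv.apply_symm_apply a x)] at h2
    have hle : l₁.length ≤ l₂.length := h.length_le
    have hlen3 : (a (List.take (a⁻¹ l₁).length (a⁻¹ l₂))).length = l₁.length := by
      rw [ha.1, List.length_take, hlen, hlen]
      omega
    have hpre : a (List.take (a⁻¹ l₁).length (a⁻¹ l₂)) <+: l₁ :=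
      List.prefix_of_prefix_length_le h2 h (le_of_eq hlen3)
    have heq : a (List.take (a⁻¹ l₁).length (a⁻¹ l₂)) = l₁ := hpre.eq_of_length hlen3
    have heq2 : List.take (a⁻¹ l₁).length (a⁻¹ l₂) = a⁻¹ l₁ := by
      apply a.injective
      rw [heq, (show ∀ x, a (a⁻¹ x) = x from fun x => Equiv.apply_symm_apply a x)]
    rw [← heq2]
    exact List.take_prefix _ _

/-- A subgroup of `Isom(T_{q,q})` is self-replicating if it is self-similar, transitive
on level 1, and all the section homomorphisms `g ↦ g|_w` are surjective. -/
def SelfReplicating {q : ℕ} (G : Subgroup (Equiv.Perm (List (Fin q)))) : Prop :=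
  (∀ w : List (Fin q), ∀ g, g ∈ G → g w = w →
      ∃ g', g' ∈ G ∧ ∀ v : List (Fin q), g (w ++ v) = w ++ g' v) ∧
  (∀ j j' : Fin q, ∃ g ∈ G, g [j] = [j']) ∧
  (∀ w : List (Fin q), ∀ g', g' ∈ G →
      ∃ g, g ∈ G ∧ g w = w ∧ ∀ v : List (Fin q), g (w ++ v) = w ++ g' v)

/-- The stabiliser of the string `w` in `G ≤ Isom(T_{q,q})`, as a subgroup of `G`. -/
def rstab {q : ℕ} (G : Subgroup (Equiv.Perm (List (Fin q)))) (w : List (Fin q)) :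
    Subgroup G where
  carrier := {g | (g : Equiv.Perm (List (Fin q))) w = w}
  one_mem' := rfl
  mul_mem' := by
    intro a b ha hb
    show ((a * b : G) : Equiv.Perm (List (Fin q))) w = w
    rw [Subgroup.coe_mul, Equiv.Perm.mul_apply]
    rw [show (b : Equiv.Perm (List (Fin q))) w = w from hb,
      show (a : Equiv.Perm (List (Fin q))) w = w from ha]
  inv_mem' := by
    intro a ha
    show ((a⁻¹ : G) : Equiv.Perm (List (Fin q))) w = w
    rw [Subgroup.coe_inv, Equiv.Perm.inv_eq_iff_eq]
    exact (show (a : Equiv.Perm (List (Fin q))) w = w from ha).symm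


end Scale

set_option linter.unusedSectionVars false

theorem Equiv.Perm.apply_inv_self {α : Type*} (f : Equiv.Perm α) (x : α) : f (f⁻¹ x) = x :=
  Equiv.apply_symm_apply f x

theorem Equiv.Perm.inv_apply_self {α : Type*} (f : Equiv.Perm α) (x : α) : f⁻¹ (f x) = x :=
  Equiv.symm_apply_apply f x

namespace Scale

namespace Vertex

variable {q : ℕ} [NeZero q]

lemma lab_eq_zero {v : Vertex q} {i : ℤ} (h : v.level < i) : v.lab i = 0 :=
  Fin.ext (by simpa using v.zero_gt i h)

@[simp] lemma parent_level (v : Vertex q) : (parent v).level = v.level - 1 := rfl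

@[simp] lemma trunc_level (v : Vertex q) (m : ℤ) : (trunc v m).level = m := rfl

@[simp] lemma child_level (v : Vertex q) (j : Fin q) : (child v j).level = v.level + 1 := rfl

lemma trunc_lab (v : Vertex q) (m i : ℤ) :
    (trunc v m).lab i = if m < i then 0 else v.lab i := rfl

lemma trunc_self (v : Vertex q) : trunc v v.level = v := by
  refine Vertex.ext rfl ?_
  funext i
  rw [trunc_lab]
  split_ifs with h
  · exact (lab_eq_zero h).symm
  · rfl

lemma trunc_trunc (v : Vertex q) {m m' : ℤ} (h : m' ≤ m) :
    trunc (trunc v m) m' = trunc v m' := by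
  refine Vertex.ext rfl ?_
  funext i
  rw [trunc_lab, trunc_lab, trunc_lab]
  split_ifs with h1 h2 <;> first | rfl | omega

lemma parent_trunc (v : Vertex q) (m : ℤ) : parent (trunc v m) = trunc v (m - 1) := by
  refine Vertex.ext rfl ?_
  funext i
  show (if m - 1 < i then 0 else (trunc v m).lab i) = if m - 1 < i then 0 else v.lab i
  rw [trunc_lab]
  split_ifs with h1 h2 <;> first | rfl | omega

lemma trunc_level_sub_one (v : Vertex q) : trunc v (v.level - 1) = parent v := rfl

@[simp] lemma zeroVtx_level (n : ℤ) : (zeroVtx q n).level = n := rfl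

@[simp] lemma zeroVtx_lab (n i : ℤ) : (zeroVtx q n).lab i = 0 := rfl

lemma parent_zeroVtx (n : ℤ) : parent (zeroVtx q n) = zeroVtx q (n - 1) := by
  refine Vertex.ext rfl ?_
  funext i
  show (if n - 1 < i then 0 else (zeroVtx q n).lab i) = 0
  split_ifs <;> rfl

lemma trunc_zeroVtx (n m : ℤ) : trunc (zeroVtx q n) m = zeroVtx q m := by
  refine Vertex.ext rfl ?_
  funext i
  rw [trunc_lab]
  split_ifs <;> rfl

lemma trunc_eq_zeroVtx {v : Vertex q} {m : ℤ} (h : ∀ i : ℤ, i ≤ m → (v.lab i : ℕ) = 0) :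
    trunc v m = zeroVtx q m := by
  refine Vertex.ext rfl ?_
  funext i
  rw [trunc_lab]
  split_ifs with h1
  · rfl
  · exact Fin.ext (by simpa using h i (by omega))

lemma parent_child (v : Vertex q) (j : Fin q) : parent (child v j) = v := by
  refine Vertex.ext (by simp) ?_
  funext i
  show (if v.level + 1 - 1 < i then 0 else (child v j).lab i) = v.lab i
  show (if v.level + 1 - 1 < i then 0 else if i = v.level + 1 then j else v.lab i) = v.lab i
  split_ifs with h1 h2
  · exact (lab_eq_zero (by omega)).symm
  · omega
  · rfl

lemma child_lab_top (v : Vertex q) (j : Fin q) : (child v j).lab (v.level + 1) = j := by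
  show (if v.level + 1 = v.level + 1 then j else v.lab (v.level + 1)) = j
  rw [if_pos rfl]

lemma eq_child_of_parent_eq {v w : Vertex q} (h : parent w = v) :
    w = child v (w.lab (v.level + 1)) := by
  have hl : v.level = w.level - 1 := by rw [← h]; rfl
  refine Vertex.ext (by rw [child_level]; omega) ?_
  funext i
  show w.lab i = if i = v.level + 1 then w.lab (v.level + 1) else v.lab i
  split_ifs with h1
  · rw [h1]
  · rw [← h]
    show w.lab i = if w.level - 1 < i then 0 else w.lab i
    split_ifs with h2
    · exact lab_eq_zero (by omega)
    · rfl

lemma child_injective (v : Vertex q) {j j' : Fin q} (h : child v j = child v j') : j = j' := by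
  have := congrArg (fun z : Vertex q => z.lab (v.level + 1)) h
  simpa [child_lab_top] using this

lemma descendant_child (v : Vertex q) (j : Fin q) : Descendant v (child v j) := by
  refine ⟨by rw [child_level]; omega, ?_⟩
  have : trunc (child v j) ((child v j).level - 1) = parent (child v j) := trunc_level_sub_one _
  rw [child_level] at this
  simpa [parent_child] using this

end Vertex

end Scale

namespace Scale

open Vertex

variable {q : ℕ} [NeZero q]

lemma mem_isomOmega {x : Equiv.Perm (Vertex q)} :
    x ∈ IsomOmega q ↔ ∀ v : Vertex q, x (parent v) = parent (x v) := Iff.rfl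

lemma level_apply_parent {x : Equiv.Perm (Vertex q)} (hx : x ∈ IsomOmega q) (v : Vertex q) :
    (x (parent v)).level = (x v).level - 1 := by
  rw [hx v]; rfl

lemma delta_trunc {x : Equiv.Perm (Vertex q)} (hx : x ∈ IsomOmega q) {v : Vertex q} {m : ℤ}
    (hm : m ≤ v.level) : (x (trunc v m)).level - m = (x v).level - v.level := by
  have key : ∀ j : ℕ, ∀ m : ℤ, m ≤ v.level → v.level - m = j →
      (x (trunc v m)).level - m = (x v).level - v.level := by
    intro j
    induction j with
    | zero =>
      intro m hm hj
      have : m = v.level := by omega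
      rw [this, trunc_self]
    | succ n ih =>
      intro m hm hj
      have h1 : trunc v m = parent (trunc v (m + 1)) := by
        rw [parent_trunc]; congr 1; omega
      rw [h1, level_apply_parent hx]
      have := ih (m + 1) (by omega) (by omega)
      omega
  exact key (v.level - m).toNat m hm (by omega)

lemma lshift_spec {x : Equiv.Perm (Vertex q)} (hx : x ∈ IsomOmega q) (v : Vertex q) :
    (x v).level = v.level + lshift x := by
  obtain ⟨N, hN⟩ := v.bdd
  set m := min (min v.level 0) (N - 1) with hm
  have h1 : trunc v m = zeroVtx q m :=
    trunc_eq_zeroVtx (fun i hi => hN i (by omega))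
  have h2 : trunc (zeroVtx q 0) m = zeroVtx q m := trunc_zeroVtx 0 m
  have d1 : (x (trunc v m)).level - m = (x v).level - v.level :=
    delta_trunc hx (by omega)
  have d2 : (x (trunc (zeroVtx q 0) m)).level - m =
      (x (zeroVtx q 0)).level - (zeroVtx q 0).level :=
    delta_trunc hx (by rw [zeroVtx_level]; omega)
  rw [h1] at d1
  rw [h2] at d2
  rw [zeroVtx_level] at d2
  show (x v).level = v.level + (x (zeroVtx q 0)).level
  omega

lemma omega_iterate {x : Equiv.Perm (Vertex q)} (hx : x ∈ IsomOmega q) (j : ℕ) (v : Vertex q) :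
    x (parent^[j] v) = parent^[j] (x v) := by
  induction j generalizing v with
  | zero => rfl
  | succ n ih =>
    rw [Function.iterate_succ_apply', Function.iterate_succ_apply', hx, ih]

lemma iterate_parent_eq_trunc (j : ℕ) (v : Vertex q) :
    parent^[j] v = trunc v (v.level - j) := by
  induction j with
  | zero => simpa using (trunc_self v).symm
  | succ n ih =>
    rw [Function.iterate_succ_apply', ih, parent_trunc]
    congr 1
    push_cast
    ring

lemma omega_trunc {x : Equiv.Perm (Vertex q)} (hx : x ∈ IsomOmega q) {v : Vertex q} {m : ℤ}
    (hm : m ≤ v.level) : x (trunc v m) = trunc (x v) (m + lshift x) := by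
  set j := (v.level - m).toNat with hj
  have h1 : trunc v m = parent^[j] v := by
    rw [iterate_parent_eq_trunc]; congr 1; omega
  rw [h1, omega_iterate hx, iterate_parent_eq_trunc]
  congr 1
  rw [lshift_spec hx]
  omega

lemma fix_lshift {x : Equiv.Perm (Vertex q)} (hx : x ∈ IsomOmega q) {z : Vertex q}
    (hfix : x z = z) : lshift x = 0 := by
  have := lshift_spec hx z
  rw [hfix] at this
  omega

lemma fix_trunc {x : Equiv.Perm (Vertex q)} (hx : x ∈ IsomOmega q) {z : Vertex q} {m : ℤ}
    (hfix : x z = z) (hm : m ≤ z.level) : x (trunc z m) = trunc z m := by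
  rw [omega_trunc hx hm, fix_lshift hx hfix, add_zero, hfix]

lemma deep_zero {x : Equiv.Perm (Vertex q)} (hx : x ∈ IsomOmega q) :
    ∃ J : ℤ, J ≤ 0 ∧ ∀ i : ℤ, i ≤ J → x (zeroVtx q i) = zeroVtx q (i + lshift x) := by
  obtain ⟨N, hN⟩ := (x (zeroVtx q 0)).bdd
  refine ⟨min 0 (N - 1 - lshift x), by omega, fun i hi => ?_⟩
  have h1 : zeroVtx q i = trunc (zeroVtx q 0) i := (trunc_zeroVtx 0 i).symm
  rw [h1, omega_trunc hx (by rw [zeroVtx_level]; omega)]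
  exact trunc_eq_zeroVtx (fun i' hi' => hN i' (by omega))

lemma elliptic_iff_lshift {x : Equiv.Perm (Vertex q)} (hx : x ∈ IsomOmega q) :
    Elliptic x ↔ lshift x = 0 := by
  constructor
  · rintro ⟨z, hz⟩; exact fix_lshift hx hz
  · intro h
    obtain ⟨J, _, hJ⟩ := deep_zero hx
    exact ⟨zeroVtx q J, by rw [hJ J le_rfl, h, add_zero]⟩

lemma omega_descendant {x : Equiv.Perm (Vertex q)} (hx : x ∈ IsomOmega q) {b z : Vertex q}
    (h : Descendant b z) : Descendant (x b) (x z) := by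
  obtain ⟨h1, h2⟩ := h
  constructor
  · rw [lshift_spec hx, lshift_spec hx]; omega
  · have : x (trunc z b.level) = trunc (x z) (b.level + lshift x) := omega_trunc hx h1
    rw [h2] at this
    rw [lshift_spec hx b, ← this]

end Scale

namespace Scale

section OrbMachinery

variable {X : Type*}

/-- The stabiliser of a point in the full permutation group. -/
def pstab (a : X) : Subgroup (Equiv.Perm X) where
  carrier := {g | g a = a}
  one_mem' := rfl
  mul_mem' := by
    intro g h hg hh
    show (g * h) a = a
    rw [Equiv.Perm.mul_apply]
    rw [show h a = a from hh, show g a = a from hg]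
  inv_mem' := by
    intro g hg
    show g⁻¹ a = a
    rw [Equiv.Perm.inv_eq_iff_eq]
    exact (show g a = a from hg).symm

@[simp] lemma mem_pstab {a : X} {g : Equiv.Perm X} : g ∈ pstab a ↔ g a = a := Iff.rfl

/-- The orbit of a point under a subgroup of the permutation group. -/
def orb (H : Subgroup (Equiv.Perm X)) (a : X) : Set X :=
  Set.range fun h : H => (h : Equiv.Perm X) a

lemma mem_orb {H : Subgroup (Equiv.Perm X)} {a y : X} :
    y ∈ orb H a ↔ ∃ g, g ∈ H ∧ g a = y :=
  ⟨fun ⟨h, hh⟩ => ⟨h.1, h.2, hh⟩, fun ⟨g, hg, h⟩ => ⟨⟨g, hg⟩, h⟩⟩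

lemma self_mem_orb {H : Subgroup (Equiv.Perm X)} {a : X} : a ∈ orb H a :=
  mem_orb.2 ⟨1, H.one_mem, rfl⟩

lemma orb_mono {H₁ H₂ : Subgroup (Equiv.Perm X)} (h : H₁ ≤ H₂) (a : X) :
    orb H₁ a ⊆ orb H₂ a := by
  intro y hy
  obtain ⟨g, hg, he⟩ := mem_orb.1 hy
  exact mem_orb.2 ⟨g, h hg, he⟩

lemma orb_eq_of_mem {H : Subgroup (Equiv.Perm X)} {a y : X} (hy : y ∈ orb H a) :
    orb H y = orb H a := by
  obtain ⟨g, hg, he⟩ := mem_orb.1 hy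
  ext z
  rw [mem_orb, mem_orb]
  constructor
  · rintro ⟨g', hg', he'⟩
    exact ⟨g' * g, H.mul_mem hg' hg, by rw [Equiv.Perm.mul_apply, he, he']⟩
  · rintro ⟨g', hg', he'⟩
    refine ⟨g' * g⁻¹, H.mul_mem hg' (H.inv_mem hg), ?_⟩
    rw [Equiv.Perm.mul_apply, ← he, Equiv.Perm.inv_apply_self, he']

lemma orb_eq_singleton {H : Subgroup (Equiv.Perm X)} {a : X} (h : H ≤ pstab a) :
    orb H a = {a} := by
  refine Set.eq_singleton_iff_unique_mem.2 ⟨self_mem_orb, fun y hy => ?_⟩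
  obtain ⟨g, hg, he⟩ := mem_orb.1 hy
  rw [← he]
  exact h hg

lemma card_orb_eq_one {H : Subgroup (Equiv.Perm X)} {a : X} (h : H ≤ pstab a) :
    Nat.card (orb H a) = 1 := by
  rw [orb_eq_singleton h]
  simp

/-- The orbit of a pair of points. -/
def orb2 (H : Subgroup (Equiv.Perm X)) (a b : X) : Set (X × X) :=
  Set.range fun h : H => ((h : Equiv.Perm X) a, (h : Equiv.Perm X) b)

lemma mem_orb2 {H : Subgroup (Equiv.Perm X)} {a b : X} {y : X × X} :
    y ∈ orb2 H a b ↔ ∃ g, g ∈ H ∧ g a = y.1 ∧ g b = y.2 := by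
  constructor
  · rintro ⟨h, hh⟩
    exact ⟨h.1, h.2, congrArg Prod.fst hh, congrArg Prod.snd hh⟩
  · rintro ⟨g, hg, h1, h2⟩
    exact ⟨⟨g, hg⟩, Prod.ext h1 h2⟩

lemma card_orb2 (H : Subgroup (Equiv.Perm X)) (a b : X) :
    Nat.card (orb2 H a b) = Nat.card (orb H a) * Nat.card (orb (H ⊓ pstab a) b) := by
  classical
  have hsec : ∀ y : orb H a, ∃ g : H, (g : Equiv.Perm X) a = (y : X) := by
    rintro ⟨y, hy⟩
    obtain ⟨g, hg, he⟩ := mem_orb.1 hy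
    exact ⟨⟨g, hg⟩, he⟩
  choose sec hsec using hsec
  rw [← Nat.card_prod]
  symm
  apply Nat.card_congr
  refine Equiv.ofBijective
    (fun p => ⟨((p.1 : X), (sec p.1 : Equiv.Perm X) (p.2 : X)), ?_⟩) ⟨?_, ?_⟩
  · obtain ⟨g', hg', he'⟩ := mem_orb.1 p.2.2
    refine mem_orb2.2 ⟨(sec p.1 : Equiv.Perm X) * g', H.mul_mem (sec p.1).2 hg'.1, ?_, ?_⟩
    · rw [Equiv.Perm.mul_apply, show g' a = a from hg'.2, hsec p.1]
    · rw [Equiv.Perm.mul_apply, he']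
  · rintro ⟨y, c⟩ ⟨y', c'⟩ hpp
    have hpp' := Subtype.ext_iff.1 hpp
    have h1 : (y : X) = (y' : X) := congrArg Prod.fst hpp'
    have hy : y = y' := Subtype.ext h1
    subst hy
    have h2 : (sec y : Equiv.Perm X) (c : X) = (sec y : Equiv.Perm X) (c' : X) :=
      congrArg Prod.snd hpp'
    have := (sec y : Equiv.Perm X).injective h2
    rw [show c = c' from Subtype.ext this]
  · rintro ⟨⟨u1, u2⟩, hu⟩
    obtain ⟨g, hg, he1, he2⟩ := mem_orb2.1 hu
    have hy : u1 ∈ orb H a := mem_orb.2 ⟨g, hg, he1⟩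
    set y : orb H a := ⟨u1, hy⟩ with hydef
    set gy := sec y with hgydef
    have hgya : (gy : Equiv.Perm X) a = u1 := hsec y
    have hmemH : (gy : Equiv.Perm X)⁻¹ * g ∈ H := H.mul_mem (H.inv_mem gy.2) hg
    have hmemS : (gy : Equiv.Perm X)⁻¹ * g ∈ pstab a := by
      rw [mem_pstab, Equiv.Perm.mul_apply, he1, ← hgya, Equiv.Perm.inv_apply_self]
    have hc : ((gy : Equiv.Perm X)⁻¹ * g) b ∈ orb (H ⊓ pstab a) b :=
      mem_orb.2 ⟨_, Subgroup.mem_inf.2 ⟨hmemH, hmemS⟩, rfl⟩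
    refine ⟨⟨y, ⟨_, hc⟩⟩, ?_⟩
    refine Subtype.ext (Prod.ext rfl ?_)
    show (gy : Equiv.Perm X) (((gy : Equiv.Perm X)⁻¹ * g) b) = u2
    rw [Equiv.Perm.mul_apply, Equiv.Perm.apply_inv_self, he2]

lemma card_orb2_comm (H : Subgroup (Equiv.Perm X)) (a b : X) :
    Nat.card (orb2 H a b) = Nat.card (orb2 H b a) := by
  have himg : orb2 H b a = Prod.swap '' orb2 H a b := by
    ext ⟨u1, u2⟩
    rw [mem_orb2]
    constructor
    · rintro ⟨g, hg, h1, h2⟩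
      exact ⟨(u2, u1), mem_orb2.2 ⟨g, hg, h2, h1⟩, rfl⟩
    · rintro ⟨⟨w1, w2⟩, hw, hswap⟩
      obtain ⟨g, hg, h1, h2⟩ := mem_orb2.1 hw
      have e1 : w2 = u1 := congrArg Prod.fst hswap
      have e2 : w1 = u2 := congrArg Prod.snd hswap
      exact ⟨g, hg, by rw [h2, e1], by rw [h1, e2]⟩
  rw [himg, Nat.card_image_of_injective Prod.swap_injective]

lemma pair_count (H : Subgroup (Equiv.Perm X)) (a b : X) :
    Nat.card (orb H a) * Nat.card (orb (H ⊓ pstab a) b) =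
      Nat.card (orb H b) * Nat.card (orb (H ⊓ pstab b) a) := by
  rw [← card_orb2, card_orb2_comm, card_orb2]

end OrbMachinery

end Scale

namespace Scale

open Vertex

variable {q : ℕ} [NeZero q] {P : Subgroup (Equiv.Perm (Vertex q))}

lemma mem_stabIn {v : Vertex q} {g : Equiv.Perm (Vertex q)} :
    g ∈ stabIn P v ↔ g ∈ P ∧ g v = v := Iff.rfl

lemma stabIn_le_P {v : Vertex q} : stabIn P v ≤ P := fun _ hg => hg.1

lemma stab_anc (hP1 : P ≤ IsomOmega q) {b z : Vertex q} (h : Descendant b z) :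
    stabIn P z ≤ stabIn P b := by
  rintro g ⟨hgP, hgz⟩
  refine ⟨hgP, ?_⟩
  have := fix_trunc (hP1 hgP) hgz h.1
  rw [h.2] at this
  exact this

lemma conjSub_stabIn {x : Equiv.Perm (Vertex q)} (hx : x ∈ P)
    (v : Vertex q) : conjSub x (stabIn P v) = stabIn P (x v) := by
  ext g
  rw [mem_stabIn]
  constructor
  · rintro ⟨h, ⟨hhP, hhv⟩, rfl⟩
    simp only [MulEquiv.toMonoidHom_eq_coe, MonoidHom.coe_coe, MulAut.conj_apply]
    refine ⟨P.mul_mem (P.mul_mem hx hhP) (P.inv_mem hx), ?_⟩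
    rw [Equiv.Perm.mul_apply, Equiv.Perm.mul_apply, Equiv.Perm.inv_apply_self, hhv]
  · rintro ⟨hgP, hgv⟩
    refine ⟨x⁻¹ * g * x, ⟨P.mul_mem (P.mul_mem (P.inv_mem hx) hgP) hx, ?_⟩, ?_⟩
    · rw [Equiv.Perm.mul_apply, Equiv.Perm.mul_apply, hgv, Equiv.Perm.inv_apply_self]
    · simp only [MulEquiv.toMonoidHom_eq_coe, MonoidHom.coe_coe, MulAut.conj_apply]
      group

/-- The quotient of a stabiliser by a point stabiliser is in bijection with the orbit. -/
noncomputable def quotEquivOrb (P : Subgroup (Equiv.Perm (Vertex q))) (u v : Vertex q) :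
    (stabIn P v ⧸ (stabIn P u).subgroupOf (stabIn P v)) ≃ orb (stabIn P v) u := by
  classical
  refine Equiv.ofBijective (fun z => Quotient.liftOn' z
    (fun g : stabIn P v => (⟨(g : Equiv.Perm (Vertex q)) u,
        mem_orb.2 ⟨g.1, g.2, rfl⟩⟩ : orb (stabIn P v) u)) ?_) ⟨?_, ?_⟩
  · intro g g' hrel
    rw [QuotientGroup.leftRel_apply] at hrel
    apply Subtype.ext
    show (g : Equiv.Perm (Vertex q)) u = (g' : Equiv.Perm (Vertex q)) u
    have hfix : ((g⁻¹ * g' : stabIn P v) : Equiv.Perm (Vertex q)) u = u := hrel.2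
    rw [Subgroup.coe_mul, Equiv.Perm.mul_apply, Subgroup.coe_inv] at hfix
    have := congrArg (g : Equiv.Perm (Vertex q)) hfix
    rw [Equiv.Perm.apply_inv_self] at this
    exact this.symm
  · intro z z'
    induction z using Quotient.inductionOn'
    induction z' using Quotient.inductionOn'
    rename_i g g'
    intro h
    have h2 : (g : Equiv.Perm (Vertex q)) u = (g' : Equiv.Perm (Vertex q)) u :=
      Subtype.ext_iff.1 h
    apply Quotient.sound'
    rw [QuotientGroup.leftRel_apply]
    refine ⟨P.mul_mem (P.inv_mem g.2.1) g'.2.1, ?_⟩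
    show ((g⁻¹ * g' : stabIn P v) : Equiv.Perm (Vertex q)) u = u
    rw [Subgroup.coe_mul, Equiv.Perm.mul_apply, Subgroup.coe_inv, ← h2,
      Equiv.Perm.inv_apply_self]
  · rintro ⟨y, hy⟩
    obtain ⟨g, hg, he⟩ := mem_orb.1 hy
    exact ⟨Quotient.mk'' ⟨g, hg⟩, Subtype.ext he⟩

lemma relindex_eq_card_orb (P : Subgroup (Equiv.Perm (Vertex q))) (u v : Vertex q) :
    (stabIn P u).relIndex (stabIn P v) = Nat.card (orb (stabIn P v) u) := by
  rw [Subgroup.relIndex, Subgroup.index_eq_card]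
  exact Nat.card_congr (quotEquivOrb P u v)

lemma orb_conj {σ : Equiv.Perm (Vertex q)} (hσ : σ ∈ P) (b z : Vertex q) :
    orb (stabIn P (σ b)) (σ z) = σ '' orb (stabIn P b) z := by
  ext y
  rw [mem_orb]
  constructor
  · rintro ⟨g, ⟨hgP, hgb⟩, he⟩
    refine ⟨(σ⁻¹ * g * σ) z, mem_orb.2 ⟨σ⁻¹ * g * σ,
      ⟨P.mul_mem (P.mul_mem (P.inv_mem hσ) hgP) hσ, ?_⟩, rfl⟩, ?_⟩
    · rw [Equiv.Perm.mul_apply, Equiv.Perm.mul_apply, hgb, Equiv.Perm.inv_apply_self]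
    · rw [← he]
      simp [Equiv.Perm.mul_apply]
  · rintro ⟨y', hy', rfl⟩
    obtain ⟨h, ⟨hhP, hhb⟩, he⟩ := mem_orb.1 hy'
    refine ⟨σ * h * σ⁻¹, ⟨P.mul_mem (P.mul_mem hσ hhP) (P.inv_mem hσ), ?_⟩, ?_⟩
    · rw [Equiv.Perm.mul_apply, Equiv.Perm.mul_apply, Equiv.Perm.inv_apply_self, hhb]
    · rw [Equiv.Perm.mul_apply, Equiv.Perm.mul_apply, Equiv.Perm.inv_apply_self, he]

lemma card_orb_conj {σ : Equiv.Perm (Vertex q)} (hσ : σ ∈ P) (b z : Vertex q) :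
    Nat.card (orb (stabIn P (σ b)) (σ z)) = Nat.card (orb (stabIn P b) z) := by
  rw [orb_conj hσ, Nat.card_image_of_injective σ.injective]

/-- The set of descendants of `b` at distance `t`. -/
def descSet (b : Vertex q) (t : ℕ) : Set (Vertex q) :=
  {z | z.level = b.level + t ∧ trunc z b.level = b}

lemma mem_descSet {b z : Vertex q} {t : ℕ} :
    z ∈ descSet b t ↔ z.level = b.level + t ∧ trunc z b.level = b := Iff.rfl

lemma descSet_descendant {b z : Vertex q} {t : ℕ} (h : z ∈ descSet b t) : Descendant b z :=
  ⟨by rw [h.1]; omega, h.2⟩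

lemma self_mem_descSet (b : Vertex q) : b ∈ descSet b 0 := by
  refine ⟨by simp, trunc_self b⟩

end Scale

namespace Scale

open Vertex

variable {q : ℕ} [NeZero q] {P : Subgroup (Equiv.Perm (Vertex q))}

/-- Extension of a vertex by a string of labels. -/
def extendV (b : Vertex q) (t : ℕ) (s : Fin t → Fin q) : Vertex q where
  level := b.level + t
  lab := fun i =>
    if h : b.level < i ∧ i ≤ b.level + t then s ⟨(i - b.level - 1).toNat, by omega⟩
    else if i ≤ b.level then b.lab i else 0
  zero_gt := by
    intro i hi
    beta_reduce
    rw [dif_neg (by omega), if_neg (by omega)]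
    simp
  bdd := by
    obtain ⟨N, hN⟩ := b.bdd
    refine ⟨min N (b.level + 1), fun i hi => ?_⟩
    beta_reduce
    rw [dif_neg (by omega), if_pos (by omega)]
    exact hN i (by omega)

lemma extendV_mem (b : Vertex q) (t : ℕ) (s : Fin t → Fin q) :
    extendV b t s ∈ descSet b t := by
  refine ⟨rfl, ?_⟩
  refine Vertex.ext rfl ?_
  funext i
  rw [trunc_lab]
  split_ifs with h1
  · exact (lab_eq_zero h1).symm
  · show (extendV b t s).lab i = b.lab i
    show (if h : b.level < i ∧ i ≤ b.level + t then _ else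
      if i ≤ b.level then b.lab i else 0) = b.lab i
    rw [dif_neg (by omega), if_pos (by omega)]

/-- Descendants at distance `t` correspond to strings of length `t`. -/
noncomputable def descEquiv (b : Vertex q) (t : ℕ) :
    descSet b t ≃ (Fin t → Fin q) where
  toFun z := fun i => (z : Vertex q).lab (b.level + 1 + i)
  invFun s := ⟨extendV b t s, extendV_mem b t s⟩
  left_inv := by
    rintro ⟨z, hz⟩
    apply Subtype.ext
    refine Vertex.ext (by rw [hz.1]; rfl) ?_
    funext i
    show (if h : b.level < i ∧ i ≤ b.level + t then
        z.lab (b.level + 1 + ((i - b.level - 1).toNat : ℕ)) else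
        if i ≤ b.level then b.lab i else 0) = z.lab i
    split_ifs with h1 h2
    · congr 1
      omega
    · rw [← hz.2, trunc_lab, if_neg (by omega)]
    · exact (lab_eq_zero (by rw [hz.1]; omega)).symm
  right_inv := by
    intro s
    funext i
    show (extendV b t s).lab (b.level + 1 + i) = s i
    show (if h : b.level < b.level + 1 + (i : ℤ) ∧ b.level + 1 + (i : ℤ) ≤ b.level + t then
        s ⟨(b.level + 1 + (i : ℤ) - b.level - 1).toNat, _⟩ else _) = s i
    rw [dif_pos ⟨by omega, by have := i.isLt; omega⟩]
    congr 1
    exact Fin.ext (by simp; omega)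

lemma descSet_finite (b : Vertex q) (t : ℕ) : (descSet b t).Finite :=
  Set.finite_coe_iff.1 (Finite.of_equiv _ (descEquiv b t).symm)

lemma card_descSet (b : Vertex q) (t : ℕ) : Nat.card (descSet b t) = q ^ t := by
  rw [Nat.card_congr (descEquiv b t)]
  simp [Nat.card_eq_fintype_card]

lemma sibling_trans (hP : IsScaleGroup P) {z₁ z₂ : Vertex q} (h : parent z₁ = parent z₂) :
    ∃ g ∈ P, g z₁ = z₂ ∧ g (parent z₁) = parent z₁ := by
  obtain ⟨g, hg, he⟩ := hP.2.2 z₁ z₂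
  refine ⟨g, hg, he, ?_⟩
  rw [(hP.1 hg) z₁, he, ← h]

lemma descSet_trans (hP : IsScaleGroup P) (b : Vertex q) :
    ∀ t : ℕ, ∀ z z' : Vertex q, z ∈ descSet b t → z' ∈ descSet b t →
      ∃ g ∈ stabIn P b, g z = z' := by
  intro t
  induction t with
  | zero =>
    intro z z' hz hz'
    have h1 : z.level = b.level := by have := hz.1; push_cast at this; omega
    have h2 : z'.level = b.level := by have := hz'.1; push_cast at this; omega
    have hzb : z = b := by rw [← hz.2, ← h1, trunc_self]
    have hzb' : z' = b := by rw [← hz'.2, ← h2, trunc_self]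
    exact ⟨1, (stabIn P b).one_mem, by rw [hzb, hzb']; rfl⟩
  | succ t ih =>
    intro z z' hz hz'
    have hlz : z.level = b.level + t + 1 := by have := hz.1; push_cast at this; omega
    have hlz' : z'.level = b.level + t + 1 := by have := hz'.1; push_cast at this; omega
    have hpz : parent z = trunc z (b.level + t) := by
      rw [← trunc_level_sub_one]; congr 1; omega
    have hpz' : parent z' = trunc z' (b.level + t) := by
      rw [← trunc_level_sub_one]; congr 1; omega
    have hpmem : trunc z (b.level + t) ∈ descSet b t :=
      ⟨by push_cast; simp, by rw [trunc_trunc _ (by omega), hz.2]⟩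
    have hpmem' : trunc z' (b.level + t) ∈ descSet b t :=
      ⟨by push_cast; simp, by rw [trunc_trunc _ (by omega), hz'.2]⟩
    obtain ⟨h₁, hh₁P, hh₁⟩ := ih _ _ hpmem hpmem'
    have hpar : parent (h₁ z) = parent z' := by
      rw [← (hP.1 hh₁P.1) z, hpz, hh₁, ← hpz']
    obtain ⟨h₂, hh₂P, hh₂e, hh₂f⟩ := sibling_trans hP hpar
    have hfixp : h₂ (trunc z' (b.level + t)) = trunc z' (b.level + t) := by
      rw [← hpz', ← hpar]; exact hh₂f
    have hh₂b : h₂ b = b := by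
      have := fix_trunc (hP.1 hh₂P) hfixp (m := b.level) (by rw [trunc_level]; omega)
      rwa [trunc_trunc _ (by omega), hz'.2] at this
    refine ⟨h₂ * h₁, (stabIn P b).mul_mem ⟨hh₂P, hh₂b⟩ hh₁P, ?_⟩
    rw [Equiv.Perm.mul_apply, hh₂e]

lemma orb_stab_descSet (hP : IsScaleGroup P) {b z : Vertex q} {t : ℕ}
    (hz : z ∈ descSet b t) : orb (stabIn P b) z = descSet b t := by
  apply Set.Subset.antisymm
  · rintro y hy
    obtain ⟨g, ⟨hgP, hgb⟩, rfl⟩ := mem_orb.1 hy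
    have hsh : lshift g = 0 := fix_lshift (hP.1 hgP) hgb
    refine ⟨by rw [lshift_spec (hP.1 hgP), hsh, add_zero, hz.1], ?_⟩
    have := omega_trunc (hP.1 hgP) (v := z) (m := b.level)
      (by rw [hz.1]; omega)
    rw [hsh, add_zero, hz.2, hgb] at this
    exact this.symm
  · intro y hy
    obtain ⟨g, hg, he⟩ := descSet_trans hP b t z y hz hy
    exact mem_orb.2 ⟨g, hg, he⟩

lemma card_orb_stab (hP : IsScaleGroup P) {b z : Vertex q} {t : ℕ}
    (hz : z ∈ descSet b t) : Nat.card (orb (stabIn P b) z) = q ^ t := by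
  rw [orb_stab_descSet hP hz, card_descSet]

end Scale

namespace Scale

open Vertex

variable {q : ℕ} [NeZero q] {P : Subgroup (Equiv.Perm (Vertex q))}

lemma lshift_eq_one (hq : 2 ≤ q) (hP : IsScaleGroup P) {x : Equiv.Perm (Vertex q)}
    (hxP : x ∈ P) {v : Vertex q} (hle : stabIn P (x v) ≤ stabIn P v)
    (hidx : Nat.card (orb (stabIn P v) (x v)) = q) : lshift x = 1 := by
  obtain ⟨Nv, hNv⟩ := v.bdd
  obtain ⟨Nx, hNx⟩ := (x v).bdd
  set m := min (min (Nv - 1) (Nx - 1)) (min v.level (x v).level) with hm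
  have htv : trunc v m = zeroVtx q m := trunc_eq_zeroVtx (fun i hi => hNv i (by omega))
  have htx : trunc (x v) m = zeroVtx q m := trunc_eq_zeroVtx (fun i hi => hNx i (by omega))
  set b := zeroVtx q m with hb
  set K := stabIn P b with hK
  have hvdesc : v ∈ descSet b (v.level - m).toNat := by
    refine ⟨?_, ?_⟩
    · show v.level = (zeroVtx q m).level + (((v.level - m).toNat : ℕ) : ℤ)
      rw [zeroVtx_level]; omega
    · show trunc v (zeroVtx q m).level = b
      rw [zeroVtx_level]; exact htv
  have hxdesc : x v ∈ descSet b ((x v).level - m).toNat := by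
    refine ⟨?_, ?_⟩
    · show (x v).level = (zeroVtx q m).level + ((((x v).level - m).toNat : ℕ) : ℤ)
      rw [zeroVtx_level]; omega
    · show trunc (x v) (zeroVtx q m).level = b
      rw [zeroVtx_level]; exact htx
  have h1 : Nat.card (orb K v) = q ^ (v.level - m).toNat := card_orb_stab hP hvdesc
  have h2 : Nat.card (orb K (x v)) = q ^ ((x v).level - m).toNat := card_orb_stab hP hxdesc
  have hfac1 : Nat.card (orb (K ⊓ pstab (x v)) v) = 1 := by
    refine card_orb_eq_one (fun g hg => ?_)
    exact (hle ⟨hg.1.1, hg.2⟩).2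
  have hKv : K ⊓ pstab v = stabIn P v := by
    ext g
    simp only [Subgroup.mem_inf, mem_pstab, mem_stabIn]
    constructor
    · rintro ⟨⟨hgP, _⟩, hgv⟩; exact ⟨hgP, hgv⟩
    · rintro ⟨hgP, hgv⟩
      refine ⟨⟨hgP, ?_⟩, hgv⟩
      have := fix_trunc (hP.1 hgP) hgv (m := m) (by omega)
      rwa [htv] at this
  have hpair := pair_count K v (x v)
  rw [hfac1, mul_one, hKv, hidx, h1, h2] at hpair
  have hexp : (v.level - m).toNat + 1 = ((x v).level - m).toNat := by
    apply Nat.pow_right_injective hq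
    show q ^ ((v.level - m).toNat + 1) = q ^ ((x v).level - m).toNat
    rw [pow_succ, hpair]
  have := lshift_spec (hP.1 hxP) v
  omega

section Axis

/-- The axis of a translation, extending the deep zero ray. -/
noncomputable def axisW (x : Equiv.Perm (Vertex q)) (J : ℤ) (r : ℤ) : Vertex q :=
  (x ^ (r - J).toNat) (zeroVtx q (r - ((r - J).toNat : ℤ)))

variable {x : Equiv.Perm (Vertex q)} {J : ℤ}

lemma axisW_of_le {r : ℤ} (hr : r ≤ J) : axisW x J r = zeroVtx q r := by
  unfold axisW
  rw [Int.toNat_of_nonpos (by omega)]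
  simp

lemma axisW_succ (hJ : ∀ i ≤ J, x (zeroVtx q i) = zeroVtx q (i + 1)) (r : ℤ) :
    x (axisW x J r) = axisW x J (r + 1) := by
  rcases le_or_gt (r + 1) J with h | h
  · rw [axisW_of_le (by omega), axisW_of_le h]
    exact hJ r (by omega)
  · show x (axisW x J r) = axisW x J (r + 1)
    unfold axisW
    rw [show (r + 1 - J).toNat = (r - J).toNat + 1 from by omega]
    rw [show r + 1 - (((r - J).toNat + 1 : ℕ) : ℤ) = r - (((r - J).toNat : ℕ) : ℤ) from by
      push_cast; omega]
    rw [pow_succ', Equiv.Perm.mul_apply]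

lemma axisW_pow (hJ : ∀ i ≤ J, x (zeroVtx q i) = zeroVtx q (i + 1)) (n : ℕ) (r : ℤ) :
    (x ^ n) (axisW x J r) = axisW x J (r + n) := by
  induction n with
  | zero => simp
  | succ k ih =>
    rw [pow_succ', Equiv.Perm.mul_apply, ih, axisW_succ hJ]
    congr 1
    push_cast
    ring

lemma level_pow (hxom : x ∈ IsomOmega q) (hsh : lshift x = 1) (n : ℕ) (z : Vertex q) :
    ((x ^ n) z).level = z.level + n := by
  induction n with
  | zero => simp
  | succ k ih =>
    rw [pow_succ', Equiv.Perm.mul_apply, lshift_spec hxom, ih, hsh]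
    push_cast
    ring

lemma axisW_level (hxom : x ∈ IsomOmega q) (hsh : lshift x = 1) (r : ℤ) :
    (axisW x J r).level = r := by
  unfold axisW
  rw [level_pow hxom hsh, zeroVtx_level]
  omega

lemma axisW_parent (hJ : ∀ i ≤ J, x (zeroVtx q i) = zeroVtx q (i + 1))
    (hxom : x ∈ IsomOmega q) (r : ℤ) :
    parent (axisW x J (r + 1)) = axisW x J r := by
  rcases le_or_gt (r + 1) J with h | h
  · rw [axisW_of_le h, axisW_of_le (by omega), parent_zeroVtx]
    congr 1
    omega
  · have key : ∀ s : ℤ, J - 1 ≤ s → parent (axisW x J (s + 1)) = axisW x J s := by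
      refine Int.le_induction (motive := fun s _ => parent (axisW x J (s + 1)) = axisW x J s) ?_ ?_
      · show parent (axisW x J (J - 1 + 1)) = axisW x J (J - 1)
        rw [show J - 1 + 1 = J from by omega, axisW_of_le le_rfl, axisW_of_le (by omega),
          parent_zeroVtx]
      · intro s' hs' ih
        rw [← axisW_succ hJ, ← hxom (axisW x J (s' + 1)), ih, axisW_succ hJ]
    exact key r (by omega)

lemma axisW_trunc (hJ : ∀ i ≤ J, x (zeroVtx q i) = zeroVtx q (i + 1))
    (hxom : x ∈ IsomOmega q) (hsh : lshift x = 1) {r r' : ℤ} (h : r ≤ r') :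
    trunc (axisW x J r') r = axisW x J r := by
  have key : ∀ n : ℕ, ∀ r : ℤ, trunc (axisW x J (r + n)) r = axisW x J r := by
    intro n
    induction n with
    | zero =>
      intro r
      have := trunc_self (axisW x J (r + (0 : ℕ)))
      rw [axisW_level hxom hsh] at this
      simpa using this
    | succ k ih =>
      intro r
      have hpar : parent (axisW x J (r + (k : ℤ) + 1)) = axisW x J (r + (k : ℤ)) :=
        axisW_parent hJ hxom (r + k)
      have hlev : (axisW x J (r + (k : ℤ) + 1)).level = r + (k : ℤ) + 1 :=
        axisW_level hxom hsh _
      have h1 : trunc (axisW x J (r + (k : ℤ) + 1)) (r + (k : ℤ)) = axisW x J (r + (k : ℤ)) := by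
        have h2 := trunc_level_sub_one (axisW x J (r + (k : ℤ) + 1))
        rw [hlev, show r + (k : ℤ) + 1 - 1 = r + (k : ℤ) from by ring] at h2
        rw [h2, hpar]
      calc trunc (axisW x J (r + ((k + 1 : ℕ) : ℤ))) r
          = trunc (axisW x J (r + (k : ℤ) + 1)) r := by
            rw [show (r : ℤ) + ((k + 1 : ℕ) : ℤ) = r + (k : ℤ) + 1 from by push_cast; ring]
        _ = trunc (trunc (axisW x J (r + (k : ℤ) + 1)) (r + (k : ℤ))) r := by
            rw [trunc_trunc _ (by omega)]
        _ = trunc (axisW x J (r + (k : ℤ))) r := by rw [h1]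
        _ = axisW x J r := ih r
  have := key (r' - r).toNat r
  rwa [show r + ((r' - r).toNat : ℤ) = r' from by omega] at this

lemma axisW_descendant (hJ : ∀ i ≤ J, x (zeroVtx q i) = zeroVtx q (i + 1))
    (hxom : x ∈ IsomOmega q) (hsh : lshift x = 1) {r r' : ℤ} (h : r ≤ r') :
    Descendant (axisW x J r) (axisW x J r') := by
  refine ⟨?_, ?_⟩
  · rw [axisW_level hxom hsh, axisW_level hxom hsh]; exact h
  · rw [axisW_level hxom hsh]
    exact axisW_trunc hJ hxom hsh h

end Axis

lemma stab_pow_le (hP : IsScaleGroup P) {x : Equiv.Perm (Vertex q)} (hxP : x ∈ P)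
    {v : Vertex q} (hle : stabIn P (x v) ≤ stabIn P v) :
    ∀ n : ℕ, stabIn P ((x ^ n) v) ≤ stabIn P v := by
  intro n
  induction n with
  | zero => simp [pow_zero]
  | succ n ih =>
    intro g hg
    have hgP := hg.1
    have hxn : (x ^ n : Equiv.Perm (Vertex q)) ∈ P := P.pow_mem hxP n
    have h1 : (x ^ n) (x v) = (x ^ (n + 1)) v := by
      rw [← Equiv.Perm.mul_apply, ← pow_succ]
    have hh : (x ^ n)⁻¹ * g * x ^ n ∈ stabIn P (x v) := by
      refine ⟨P.mul_mem (P.mul_mem (P.inv_mem hxn) hgP) hxn, ?_⟩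
      show ((x ^ n)⁻¹ * g * x ^ n) (x v) = x v
      rw [Equiv.Perm.mul_apply, Equiv.Perm.mul_apply, h1, hg.2, ← h1,
        Equiv.Perm.inv_apply_self]
    have h2 := (hle hh).2
    rw [Equiv.Perm.mul_apply, Equiv.Perm.mul_apply] at h2
    apply ih
    refine ⟨hgP, ?_⟩
    have h3 := congrArg (x ^ n : Equiv.Perm (Vertex q)) h2
    rwa [Equiv.Perm.apply_inv_self] at h3

end Scale

namespace Scale

open Vertex

variable {q : ℕ} [NeZero q] {P : Subgroup (Equiv.Perm (Vertex q))}

lemma key_union (hq : 2 ≤ q) (hP : IsScaleGroup P) {x : Equiv.Perm (Vertex q)} (hxP : x ∈ P)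
    {v : Vertex q} (hle : stabIn P (x v) ≤ stabIn P v) (hsh : lshift x = 1)
    {g : Equiv.Perm (Vertex q)} (hgP : g ∈ P) (hell : Elliptic g) :
    ∃ n : ℤ, (x ^ n)⁻¹ * g * x ^ n ∈ stabIn P v := by
  have hxom : x ∈ IsomOmega q := hP.1 hxP
  obtain ⟨J0, hJ0le, hJ0⟩ := deep_zero hxom
  obtain ⟨Nv, hNv⟩ := v.bdd
  set J : ℤ := min J0 (min (Nv - 1) v.level) with hJdef
  have hJlow : ∀ i ≤ J, x (zeroVtx q i) = zeroVtx q (i + 1) := by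
    intro i hi
    have := hJ0 i (by omega)
    rwa [hsh] at this
  set D : ℕ := (v.level - J).toNat with hDdef
  have hvlevel : v.level = J + D := by omega
  have hvdesc : v ∈ descSet (axisW x J J) D := by
    rw [axisW_of_le le_rfl]
    refine ⟨by rw [zeroVtx_level]; omega, ?_⟩
    show trunc v (zeroVtx q J).level = zeroVtx q J
    rw [zeroVtx_level]
    exact trunc_eq_zeroVtx (fun i hi => hNv i (by omega))
  have hAanti : ∀ {r r' : ℤ}, r ≤ r' →
      stabIn P (axisW x J r') ≤ stabIn P (axisW x J r) := by
    intro r r' h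
    exact stab_anc hP.1 (axisW_descendant hJlow hxom hsh h)
  have horbsub : ∀ r : ℤ, J ≤ r →
      orb (stabIn P (axisW x J r)) v ⊆ descSet (axisW x J J) D := by
    intro r hr
    refine (orb_mono (hAanti hr) v).trans ?_
    rw [orb_stab_descSet hP hvdesc]
  have horbfin : ∀ r : ℤ, J ≤ r → (orb (stabIn P (axisW x J r)) v).Finite := by
    intro r hr
    exact (descSet_finite _ _).subset (horbsub r hr)
  have hαanti : ∀ {r r' : ℤ}, J ≤ r → r ≤ r' →
      Nat.card (orb (stabIn P (axisW x J r')) v) ≤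
        Nat.card (orb (stabIn P (axisW x J r)) v) := by
    intro r r' h h'
    rw [Nat.card_coe_set_eq, Nat.card_coe_set_eq]
    exact Set.ncard_le_ncard (orb_mono (hAanti h') v) (horbfin r h)
  have hαpos : ∀ r : ℤ, J ≤ r → 0 < Nat.card (orb (stabIn P (axisW x J r)) v) := by
    intro r hr
    rw [Nat.card_coe_set_eq]
    exact (Set.ncard_pos (horbfin r hr)).2 ⟨v, self_mem_orb⟩
  -- stabilisation
  obtain ⟨R, hRJ, hRα⟩ : sInf {k : ℕ | ∃ r : ℤ, J ≤ r ∧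
      Nat.card (orb (stabIn P (axisW x J r)) v) = k} ∈
      {k : ℕ | ∃ r : ℤ, J ≤ r ∧ Nat.card (orb (stabIn P (axisW x J r)) v) = k} :=
    Nat.sInf_mem ⟨Nat.card (orb (stabIn P (axisW x J J)) v), J, le_rfl, rfl⟩
  have hstab : ∀ r : ℤ, R ≤ r → Nat.card (orb (stabIn P (axisW x J r)) v) =
      Nat.card (orb (stabIn P (axisW x J R)) v) := by
    intro r hr
    refine le_antisymm (hαanti hRJ hr) ?_
    rw [hRα]
    exact Nat.sInf_le ⟨r, le_trans hRJ hr, rfl⟩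
  -- main counting at level R
  set n : ℕ := (R - J).toNat with hndef
  have hRJn : R = J + n := by omega
  have hxnom : (x ^ n : Equiv.Perm (Vertex q)) ∈ IsomOmega q := (IsomOmega q).pow_mem hxom n
  have hvnlevel : ((x ^ n) v).level = v.level + n := level_pow hxom hsh n v
  have hvn_desc : (x ^ n) v ∈ descSet (axisW x J R) D := by
    have hD1 := omega_descendant hxnom (descSet_descendant hvdesc)
    rw [axisW_pow hJlow n J] at hD1
    rw [hRJn]
    exact ⟨by rw [axisW_level hxom hsh, hvnlevel]; omega, hD1.2⟩
  have hvn_stab_le : stabIn P ((x ^ n) v) ≤ stabIn P v := stab_pow_le hP hxP hle n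
  -- (I)
  have hA_R_stab_vn_le : stabIn P (axisW x J R) ⊓ pstab ((x ^ n) v) ≤ pstab v := by
    intro g' hg'
    rw [Subgroup.mem_inf] at hg'
    exact (hvn_stab_le ⟨hg'.1.1, hg'.2⟩).2
  have hI := pair_count (stabIn P (axisW x J R)) v ((x ^ n) v)
  rw [card_orb_eq_one hA_R_stab_vn_le, mul_one] at hI
  have hcard_vn : Nat.card (orb (stabIn P (axisW x J R)) ((x ^ n) v)) = q ^ D := by
    have hAR : stabIn P (axisW x J R) = stabIn P ((x ^ n) (axisW x J J)) := by
      rw [axisW_pow hJlow n J, ← hRJn]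
    rw [hAR, card_orb_conj (P.pow_mem hxP n), card_orb_stab hP hvdesc]
  -- (II)
  have hwtop_mem : axisW x J (R + D) ∈ descSet (axisW x J R) D := by
    refine ⟨by rw [axisW_level hxom hsh, axisW_level hxom hsh], ?_⟩
    rw [axisW_level hxom hsh]
    exact axisW_trunc hJlow hxom hsh (by omega)
  have hAinf : stabIn P (axisW x J R) ⊓ pstab (axisW x J (R + D)) =
      stabIn P (axisW x J (R + D)) := by
    ext g'
    rw [Subgroup.mem_inf]
    constructor
    · rintro ⟨h1, h2⟩
      exact ⟨h1.1, h2⟩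
    · intro h1
      exact ⟨hAanti (by omega) h1, h1.2⟩
  have hII := pair_count (stabIn P (axisW x J R)) v (axisW x J (R + D))
  rw [hAinf, card_orb_stab hP hwtop_mem, hstab (R + D) (by omega)] at hII
  have hScard : Nat.card (orb (stabIn P (axisW x J R) ⊓ pstab v) (axisW x J (R + D))) =
      q ^ D := by
    apply Nat.eq_of_mul_eq_mul_left (hαpos R hRJ)
    rw [hII]
    exact mul_comm _ _
  have hSsub : orb (stabIn P (axisW x J R) ⊓ pstab v) (axisW x J (R + D)) ⊆
      descSet (axisW x J R) D := by
    refine (orb_mono inf_le_left _).trans ?_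
    rw [orb_stab_descSet hP hwtop_mem]
  have hSeq : orb (stabIn P (axisW x J R) ⊓ pstab v) (axisW x J (R + D)) =
      descSet (axisW x J R) D := by
    refine Set.eq_of_subset_of_ncard_le hSsub ?_ (descSet_finite _ _)
    rw [← Nat.card_coe_set_eq, ← Nat.card_coe_set_eq, hScard, card_descSet]
  have hvn_orb : (x ^ n) v ∈ orb (stabIn P (axisW x J R) ⊓ pstab v) (axisW x J (R + D)) := by
    rw [hSeq]
    exact hvn_desc
  have hvncard : Nat.card (orb (stabIn P (axisW x J R) ⊓ pstab v) ((x ^ n) v)) = q ^ D := by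
    rw [orb_eq_of_mem hvn_orb, hScard]
  rw [hvncard, hcard_vn] at hI
  have hαR1 : Nat.card (orb (stabIn P (axisW x J R)) v) = 1 := by
    have hqD : 0 < q ^ D := pow_pos (by omega) D
    apply Nat.eq_of_mul_eq_mul_right hqD
    rw [hI, one_mul]
  have hE : ∀ r : ℤ, R ≤ r → ∀ g', g' ∈ P → g' (axisW x J r) = axisW x J r → g' v = v := by
    intro r hr g' hg'P hg'fix
    have hg'A : g' ∈ stabIn P (axisW x J R) := hAanti hr ⟨hg'P, hg'fix⟩
    have hmem : g' v ∈ orb (stabIn P (axisW x J R)) v := mem_orb.2 ⟨g', hg'A, rfl⟩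
    have h1 : (orb (stabIn P (axisW x J R)) v).ncard = 1 := by
      rw [← Nat.card_coe_set_eq]
      exact hαR1
    obtain ⟨a, ha⟩ := Set.ncard_eq_one.1 h1
    have h2 : v = a := by
      have h3 := self_mem_orb (H := stabIn P (axisW x J R)) (a := v)
      rw [ha] at h3
      exact h3
    rw [ha] at hmem
    exact (Set.mem_singleton_iff.1 hmem).trans h2.symm
  -- application to g
  have hgom := hP.1 hgP
  have hgsh : lshift g = 0 := (elliptic_iff_lshift hgom).1 hell
  obtain ⟨Jg, hJgle, hJg⟩ := deep_zero hgom
  set i0 : ℤ := min J Jg with hi0def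
  have hgfix : g (axisW x J i0) = axisW x J i0 := by
    rw [axisW_of_le (by omega)]
    have := hJg i0 (by omega)
    rwa [hgsh, add_zero] at this
  set m : ℕ := (R - i0).toNat with hmdef
  have hfix2 : (x ^ m * g * (x ^ m)⁻¹) (axisW x J (i0 + m)) = axisW x J (i0 + m) := by
    have h1 : (x ^ m : Equiv.Perm (Vertex q)) (axisW x J i0) = axisW x J (i0 + m) :=
      axisW_pow hJlow m i0
    rw [Equiv.Perm.mul_apply, Equiv.Perm.mul_apply, ← h1, Equiv.Perm.inv_apply_self, hgfix, h1]
  have hyP : x ^ m * g * (x ^ m)⁻¹ ∈ P :=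
    P.mul_mem (P.mul_mem (P.pow_mem hxP m) hgP) (P.inv_mem (P.pow_mem hxP m))
  refine ⟨-(m : ℤ), ?_⟩
  rw [zpow_neg, zpow_natCast, inv_inv]
  exact ⟨hyP, hE (i0 + m) (by omega) _ hyP hfix2⟩

end Scale

open Scale in
/-- In a scale group `P`, with `V` the stabiliser of a vertex `v`, there is
`x ∈ P` with `xVx⁻¹ < V` of index `q`, and for any such `x` the union of the conjugates
`xⁿVx⁻ⁿ` is the set of elliptic elements of `P`. -/
theorem statement_1 (q : ℕ) [NeZero q] (hq : 2 ≤ q)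
    (P : Subgroup (Equiv.Perm (Vertex q))) (hP : IsScaleGroup P) (v : Vertex q) :
    (∃ x ∈ P, conjSub x (stabIn P v) < stabIn P v ∧
        (conjSub x (stabIn P v)).relIndex (stabIn P v) = q) ∧
    (∀ x ∈ P, conjSub x (stabIn P v) < stabIn P v →
      (conjSub x (stabIn P v)).relIndex (stabIn P v) = q →
      {g : Equiv.Perm (Vertex q) | ∃ n : ℤ, (x ^ n)⁻¹ * g * x ^ n ∈ stabIn P v} =
        {g : Equiv.Perm (Vertex q) | g ∈ P ∧ Elliptic g}) := by
  constructor
  · -- existence of x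
    obtain ⟨x0, hx0P, hx0v⟩ := hP.2.2 v (Vertex.child v 0)
    have hconj : conjSub x0 (stabIn P v) = stabIn P (Vertex.child v 0) := by
      rw [conjSub_stabIn hx0P, hx0v]
    have hle : stabIn P (Vertex.child v 0) ≤ stabIn P v :=
      stab_anc hP.1 (Vertex.descendant_child v 0)
    have hmemc : ∀ j : Fin q, Vertex.child v j ∈ descSet v 1 := fun j =>
      ⟨by rw [Vertex.child_level]; norm_num, (Vertex.descendant_child v j).2⟩
    have hne : (0 : Fin q) ≠ (1 : Fin q) := by
      intro h
      have h1 : ((1 : Fin q) : ℕ) = 1 % q := Fin.val_one' q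
      have h2 : ((0 : Fin q) : ℕ) = 0 := rfl
      have h3 := congrArg Fin.val h
      rw [h1, h2, Nat.mod_eq_of_lt (by omega)] at h3
      omega
    obtain ⟨h, hh, he⟩ := descSet_trans hP v 1 (Vertex.child v 0) (Vertex.child v 1)
      (hmemc 0) (hmemc 1)
    refine ⟨x0, hx0P, ?_, ?_⟩
    · rw [hconj]
      refine lt_of_le_of_ne hle (fun heq => ?_)
      have hmem : h ∈ stabIn P (Vertex.child v 0) := by rw [heq]; exact hh
      have hcc : Vertex.child v (1 : Fin q) = Vertex.child v 0 := he.symm.trans hmem.2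
      exact hne (Vertex.child_injective v hcc).symm
    · rw [hconj, relindex_eq_card_orb, card_orb_stab hP (hmemc 0), pow_one]
  · -- the union of conjugates is the elliptic part
    intro x hxP hlt hidx
    rw [conjSub_stabIn hxP v] at hlt hidx
    have hle := hlt.le
    rw [relindex_eq_card_orb] at hidx
    have hsh : lshift x = 1 := lshift_eq_one hq hP hxP hle hidx
    ext g
    simp only [Set.mem_setOf_eq]
    constructor
    · rintro ⟨nz, hn⟩
      have h2 : x ^ nz ∈ P := P.zpow_mem hxP nz
      have hgP : g ∈ P := by
        have hform : g = (x ^ nz) * ((x ^ nz)⁻¹ * g * x ^ nz) * (x ^ nz)⁻¹ := by group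
        rw [hform]
        exact P.mul_mem (P.mul_mem h2 hn.1) (P.inv_mem h2)
      refine ⟨hgP, ⟨(x ^ nz) v, ?_⟩⟩
      have hfix := hn.2
      rw [Equiv.Perm.mul_apply, Equiv.Perm.mul_apply] at hfix
      have h3 := congrArg (x ^ nz : Equiv.Perm (Vertex q)) hfix
      rwa [Equiv.Perm.apply_inv_self] at h3
    · rintro ⟨hgP, hell⟩
      exact key_union hq hP hxP hle hsh hgP hell
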